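/- For each ω ∈ Ω let L_ω be a linear operator bounded on both C⁰(𝕋) and C¹(𝕋), and let (h_ω)_{ω∈Ω} ⊆ C⁰(𝕋). Assume: (i) there are β > 1 and C₁ ∈ L^{p₁}(Ω,𝓕,ℙ), p₁ > 0, such that for ℙ-a.e. ω, all j ≥ 1 and all g ∈ C¹(𝕋): ‖L^{j}_{ω} g − (∫ g dm)·h_{σ^{j}ω}‖_∞ ≤ C₁(ω)·j^{−β}·‖g‖_{C¹}; (ii) ‖L_ω 𝟙‖_∞ ≤ E(ω) with E ∈ L^{e₁}(Ω,𝓕,ℙ), e₁ > 0; (iii) there is Q₁ ∈ L^{d₁}(Ω,𝓕,ℙ), d₁ > 0, such that for ℙ-a.e. ω, all j ≥ 1 and all g ∈ C¹(𝕋): ‖(L^{j}_{σ^{−j}ω} g)′‖_∞ ≤ ‖L^{j}_{σ^{−j}ω}𝟙‖_∞ · Q₁(ω) · ‖g‖_{C¹}. Define V(ω) := C₁(σ^{−1}ω) + E(σ^{−1}ω), A(ω) := 1 + C₁(ω) and B(ω) := (1 + V(ω))·(1 + Q₁(ω)). Then for ℙ-a.e. ω, all n ≥ 1 and all 0 ≤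 j ≤ n: ‖L^{j}_{σ^{−n}ω}‖_{C¹→C¹} ≤ A(σ^{−n}ω)·B(σ^{j−n}ω); moreover A ∈ L^{p₁}(Ω,𝓕,ℙ) and B ∈ L^{q′}(Ω,𝓕,ℙ) where 1/q′ = 1/d₁ + 1/min(p₁, e₁). -/

import Mathlib

open MeasureTheory Function

noncomputable section

/-- `C ∈ L^p(Ω,𝓕,ℙ)` for a nonnegative random variable `C`. -/
def MemLpRV {Ω : Type*} [MeasurableSpace Ω] (ℙ : Measure Ω) (p : ℝ) (C : Ω → ℝ) : Prop :=
  Measurable C ∧ (∀ ω, 0 ≤ C ω) ∧ Integrable (fun ω => C ω ^ p) ℙ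

/-- The `C^r` norm of a (1-periodic) function on `ℝ`:
`max_{0 ≤ i ≤ r} sup_x |f^{(i)}(x)|`. -/
def crNorm (r : ℕ) (f : ℝ → ℝ) : ℝ :=
  ⨆ p : Fin (r + 1) × ℝ, |iteratedDeriv (p.1 : ℕ) f p.2|

/-- The transfer operator (with respect to Lebesgue/Haar measure) of the circle map
induced by the lift `T : ℝ → ℝ`, acting on (1-periodic) functions:
`L g (x) = Σ_{y : T y = x} g(y)/|T'(y)|`, the sum running over the preimages of `x`
in a fundamental domain `[0,1)`. -/
def transferOp (T : ℝ → ℝ) (g : ℝ → ℝ) (x : ℝ) : ℝ :=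
  ∑' y : {y : ℝ // y ∈ Set.Ico (0 : ℝ) 1 ∧ ∃ k : ℤ, T y = x + k}, g (y : ℝ) / |deriv T (y : ℝ)|

/-- Iterates of maps along an orbit of `σ`: `T^n_ω = T_{σ^{n-1}ω} ∘ ⋯ ∘ T_ω`. -/
def mapIter {Ω : Type*} (σ : Ω → Ω) (T : Ω → ℝ → ℝ) : ℕ → Ω → ℝ → ℝ
  | 0, _, x => x
  | n + 1, ω, x => mapIter σ T n (σ ω) (T ω x)

/-- Iterates of the transfer operators along an orbit of `σ`:
`L^n_ω = L_{σ^{n-1}ω} ∘ ⋯ ∘ L_ω`. -/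
def transferIter {Ω : Type*} (σ : Ω → Ω) (T : Ω → ℝ → ℝ) : ℕ → Ω → (ℝ → ℝ) → ℝ → ℝ
  | 0, _, g => g
  | n + 1, ω, g => transferIter σ T n (σ ω) (transferOp (T ω) g)

/-- The composition `z_n ∘ z_{n-1} ∘ ⋯ ∘ z_1` (the empty composition is the identity). -/
def compSeq (z : ℕ → ℝ → ℝ) : ℕ → ℝ → ℝ
  | 0, x => x
  | n + 1, x => z (n + 1) (compSeq z n x)

/-- Birkhoff sums `S_n φ (x) = Σ_{j<n} φ_{σ^j ω}(T^j_ω x)` along an orbit of `σ`. -/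
def birkSum {Ω : Type*} (σ : Ω → Ω) (T : Ω → ℝ → ℝ) (φ : Ω → ℝ → ℝ) (n : ℕ) (ω : Ω)
    (x : ℝ) : ℝ :=
  ∑ j ∈ Finset.range n, φ (σ^[j] ω) (mapIter σ T j ω x)

/-- Integral over the circle (one period). -/
def circInt (g : ℝ → ℝ) : ℝ := ∫ x in Set.Ioc (0 : ℝ) 1, g x

/-- Iterates of linear operators on functions along an orbit of `σ`:
`L^n_ω = L_{σ^{n-1}ω} ∘ ⋯ ∘ L_ω`. -/
def iterLin {Ω : Type*} (σ : Ω → Ω) (L : Ω → (ℝ → ℝ) →ₗ[ℝ] (ℝ → ℝ)) :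
    ℕ → Ω → (ℝ → ℝ) →ₗ[ℝ] (ℝ → ℝ)
  | 0, _ => LinearMap.id
  | n + 1, ω => (iterLin σ L n (σ ω)).comp (L ω)


lemma crNorm_nonneg (r : ℕ) (f : ℝ → ℝ) : 0 ≤ crNorm r f :=
  Real.iSup_nonneg fun _ => abs_nonneg _

lemma crNorm_le {r : ℕ} {f : ℝ → ℝ} {K : ℝ} (hK : 0 ≤ K)
    (h : ∀ (i : Fin (r + 1)) (x : ℝ), |iteratedDeriv (i : ℕ) f x| ≤ K) : crNorm r f ≤ K :=
  Real.iSup_le (fun p => h p.1 p.2) hK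

lemma bdd_abs_of_periodic {f : ℝ → ℝ} (hc : Continuous f) (hp : Periodic f 1) :
    ∃ M : ℝ, ∀ x, |f x| ≤ M := by
  obtain ⟨M, hM⟩ := (isCompact_Icc (a := (0:ℝ)) (b := 1)).exists_bound_of_continuousOn
    hc.continuousOn
  refine ⟨M, fun x => ?_⟩
  obtain ⟨y, hy, hxy⟩ := hp.exists_mem_Ico₀ one_pos x
  rw [hxy, ← Real.norm_eq_abs]
  exact hM y ⟨hy.1, hy.2.le⟩

lemma abs_le_crNorm0 {f : ℝ → ℝ} (hc : Continuous f) (hp : Periodic f 1) (x : ℝ) :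
    |f x| ≤ crNorm 0 f := by
  obtain ⟨M, hM⟩ := bdd_abs_of_periodic hc hp
  have hb : BddAbove (Set.range fun p : Fin 1 × ℝ => |iteratedDeriv (p.1 : ℕ) f p.2|) := by
    refine ⟨M, ?_⟩
    rintro v ⟨p, rfl⟩
    have h1 := p.1.isLt
    have h0 : ((p.1 : ℕ)) = 0 := by omega
    show |iteratedDeriv (p.1 : ℕ) f p.2| ≤ M
    rw [h0, iteratedDeriv_zero]
    exact hM p.2
  calc |f x| = |iteratedDeriv ((0 : Fin 1) : ℕ) f x| := by
        rw [show ((0 : Fin 1) : ℕ) = 0 from rfl, iteratedDeriv_zero]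
    _ ≤ crNorm 0 f := le_ciSup hb ((0 : Fin 1), x)

lemma periodic_deriv1 {f : ℝ → ℝ} (hp : Periodic f 1) : Periodic (deriv f) 1 := by
  intro x
  have hfe : (fun y => f (y + 1)) = f := funext fun y => hp y
  rw [← deriv_comp_add_const f 1 x, hfe]

lemma crNorm1_pointwise {f : ℝ → ℝ} (hf : ContDiff ℝ 1 f) (hp : Periodic f 1) :
    (∀ x, |f x| ≤ crNorm 1 f) ∧ (∀ x, |deriv f x| ≤ crNorm 1 f) := by
  have hdc : Continuous (deriv f) := hf.continuous_deriv le_rfl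
  obtain ⟨M0, hM0⟩ := bdd_abs_of_periodic hf.continuous hp
  obtain ⟨M1, hM1⟩ := bdd_abs_of_periodic hdc (periodic_deriv1 hp)
  have hb : BddAbove (Set.range fun p : Fin 2 × ℝ => |iteratedDeriv (p.1 : ℕ) f p.2|) := by
    refine ⟨max M0 M1, ?_⟩
    rintro v ⟨p, rfl⟩
    have h1 := p.1.isLt
    have h0 : ((p.1 : ℕ)) = 0 ∨ ((p.1 : ℕ)) = 1 := by omega
    show |iteratedDeriv (p.1 : ℕ) f p.2| ≤ max M0 M1
    rcases h0 with h0 | h0 <;> rw [h0]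
    · rw [iteratedDeriv_zero]; exact (hM0 p.2).trans (le_max_left _ _)
    · rw [iteratedDeriv_one]; exact (hM1 p.2).trans (le_max_right _ _)
  constructor
  · intro x
    calc |f x| = |iteratedDeriv ((0 : Fin 2) : ℕ) f x| := by
          rw [show ((0 : Fin 2) : ℕ) = 0 from rfl, iteratedDeriv_zero]
      _ ≤ crNorm 1 f := le_ciSup hb ((0 : Fin 2), x)
  · intro x
    calc |deriv f x| = |iteratedDeriv ((1 : Fin 2) : ℕ) f x| := by
          rw [show ((1 : Fin 2) : ℕ) = 1 from rfl, iteratedDeriv_one]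
      _ ≤ crNorm 1 f := le_ciSup hb ((1 : Fin 2), x)

lemma abs_deriv_le_iSup {f : ℝ → ℝ} (hf : ContDiff ℝ 1 f) (hp : Periodic f 1) (x : ℝ) :
    |deriv f x| ≤ ⨆ y : ℝ, |deriv f y| := by
  obtain ⟨M, hM⟩ := bdd_abs_of_periodic (hf.continuous_deriv le_rfl) (periodic_deriv1 hp)
  exact le_ciSup ⟨M, by rintro v ⟨y, rfl⟩; exact hM y⟩ x

lemma crNorm1_one_le : crNorm 1 (fun _ : ℝ => (1:ℝ)) ≤ 1 := by
  refine crNorm_le one_pos.le fun i x => ?_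
  have h1 := i.isLt
  have h0 : ((i : ℕ)) = 0 ∨ ((i : ℕ)) = 1 := by omega
  rcases h0 with h0 | h0 <;> rw [h0]
  · rw [iteratedDeriv_zero]; norm_num
  · rw [iteratedDeriv_one]; simp

lemma iterLin_pres {Ω : Type*} (σ : Ω → Ω) (L : Ω → (ℝ → ℝ) →ₗ[ℝ] (ℝ → ℝ))
    (hL : ∀ ω g, ContDiff ℝ 1 g → Periodic g 1 →
      ContDiff ℝ 1 (L ω g) ∧ Periodic (L ω g) 1) :
    ∀ (n : ℕ) (ω : Ω) (g : ℝ → ℝ), ContDiff ℝ 1 g → Periodic g 1 →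
      ContDiff ℝ 1 (iterLin σ L n ω g) ∧ Periodic (iterLin σ L n ω g) 1 := by
  intro n
  induction n with
  | zero => intro ω g hg hp; exact ⟨hg, hp⟩
  | succ n ih =>
    intro ω g hg hp
    have hLg := hL ω g hg hp
    exact ih (σ ω) (L ω g) hLg.1 hLg.2

lemma rpow_le_one_add_rpow {a q p : ℝ} (ha : 0 ≤ a) (hq : 0 ≤ q) (hqp : q ≤ p) :
    a ^ q ≤ 1 + a ^ p := by
  rcases le_total a 1 with hle | hle
  · have := Real.rpow_le_one ha hle hq
    nlinarith [Real.rpow_nonneg ha p]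
  · have := Real.rpow_le_rpow_of_exponent_le hle hqp
    linarith

lemma one_add_rpow_le {a p : ℝ} (ha : 0 ≤ a) (hp : 0 ≤ p) :
    (1 + a) ^ p ≤ 2 ^ p * (1 + a ^ p) := by
  rcases le_total a 1 with hle | hle
  · have h1 : (1 + a) ^ p ≤ (2:ℝ) ^ p := Real.rpow_le_rpow (by linarith) (by linarith) hp
    have h2 : (0:ℝ) ≤ (2:ℝ) ^ p := Real.rpow_nonneg (by norm_num) p
    nlinarith [Real.rpow_nonneg ha p]
  · have h1 : (1 + a) ^ p ≤ (2 * a) ^ p :=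
      Real.rpow_le_rpow (by linarith) (by linarith) hp
    rw [Real.mul_rpow (by norm_num) ha] at h1
    nlinarith [Real.rpow_nonneg (show (0:ℝ) ≤ 2 by norm_num) p, Real.rpow_nonneg ha p]

lemma add_rpow_le' {x y p : ℝ} (hx : 0 ≤ x) (hy : 0 ≤ y) (hp : 0 ≤ p) :
    (x + y) ^ p ≤ 2 ^ p * (x ^ p + y ^ p) := by
  rcases le_total x y with hle | hle
  · have h1 : (x + y) ^ p ≤ (2 * y) ^ p := Real.rpow_le_rpow (by linarith) (by linarith) hp
    rw [Real.mul_rpow (by norm_num) hy] at h1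
    nlinarith [Real.rpow_nonneg (show (0:ℝ) ≤ 2 by norm_num) p, Real.rpow_nonneg hx p]
  · have h1 : (x + y) ^ p ≤ (2 * x) ^ p := Real.rpow_le_rpow (by linarith) (by linarith) hp
    rw [Real.mul_rpow (by norm_num) hx] at h1
    nlinarith [Real.rpow_nonneg (show (0:ℝ) ≤ 2 by norm_num) p, Real.rpow_nonneg hy p]

lemma integrable_one_add_rpow {Ω : Type*} [MeasurableSpace Ω] {ℙ : Measure Ω}
    [IsProbabilityMeasure ℙ] {C : Ω → ℝ} (hCm : Measurable C) (hCn : ∀ ω, 0 ≤ C ω)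
    {p q : ℝ} (hq : 0 < q) (hqp : q ≤ p) (hint : Integrable (fun ω => C ω ^ p) ℙ) :
    Integrable (fun ω => (1 + C ω) ^ q) ℙ := by
  have hmeas : Measurable fun ω => (1 + C ω) ^ q :=
    (Real.continuous_rpow_const hq.le).measurable.comp (measurable_const.add hCm)
  refine Integrable.mono' (g := fun ω => 2 ^ q * (2 + C ω ^ p))
    (((integrable_const (2:ℝ)).add hint).const_mul _) hmeas.aestronglyMeasurable ?_
  filter_upwards with ω
  rw [Real.norm_eq_abs, abs_of_nonneg (Real.rpow_nonneg (by nlinarith [hCn ω]) q)]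
  have h1 := one_add_rpow_le (hCn ω) hq.le
  have h2 := rpow_le_one_add_rpow (hCn ω) hq.le hqp
  nlinarith [Real.rpow_nonneg (show (0:ℝ) ≤ 2 by norm_num) q]

lemma integrable_one_add_add_rpow {Ω : Type*} [MeasurableSpace Ω] {ℙ : Measure Ω}
    [IsProbabilityMeasure ℙ] {A B : Ω → ℝ} (hAm : Measurable A) (hBm : Measurable B)
    (hAn : ∀ ω, 0 ≤ A ω) (hBn : ∀ ω, 0 ≤ B ω)
    {p e m : ℝ} (hm : 0 < m) (hmp : m ≤ p) (hme : m ≤ e)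
    (hA : Integrable (fun ω => A ω ^ p) ℙ) (hB : Integrable (fun ω => B ω ^ e) ℙ) :
    Integrable (fun ω => (1 + (A ω + B ω)) ^ m) ℙ := by
  have hmeas : Measurable fun ω => (1 + (A ω + B ω)) ^ m :=
    (Real.continuous_rpow_const hm.le).measurable.comp (measurable_const.add (hAm.add hBm))
  refine Integrable.mono'
    (g := fun ω => 2 ^ m * (1 + 2 ^ m * ((1 + A ω ^ p) + (1 + B ω ^ e))))
    (((integrable_const (1:ℝ)).add
      ((((integrable_const (1:ℝ)).add hA).add ((integrable_const (1:ℝ)).add hB)).const_mul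
        _)).const_mul _) hmeas.aestronglyMeasurable ?_
  filter_upwards with ω
  have hab : 0 ≤ A ω + B ω := by nlinarith [hAn ω, hBn ω]
  rw [Real.norm_eq_abs, abs_of_nonneg (Real.rpow_nonneg (by linarith) m)]
  have h1 := one_add_rpow_le hab hm.le
  have h2 := add_rpow_le' (hAn ω) (hBn ω) hm.le
  have h3 := rpow_le_one_add_rpow (hAn ω) hm.le hmp
  have h4 := rpow_le_one_add_rpow (hBn ω) hm.le hme
  have h2m : (0:ℝ) ≤ (2:ℝ) ^ m := Real.rpow_nonneg (by norm_num) m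
  nlinarith [mul_le_mul_of_nonneg_left h2 h2m,
    mul_le_mul_of_nonneg_left (add_le_add h3 h4) (mul_nonneg h2m h2m)]

lemma int_abs_le_crNorm1 {G : ℝ → ℝ} (hG : ContDiff ℝ 1 G) (hGp : Periodic G 1) :
    |∫ t in Set.Ioc (0:ℝ) 1, G t| ≤ crNorm 1 G := by
  have := norm_setIntegral_le_of_norm_le_const (μ := volume) (s := Set.Ioc (0:ℝ) 1) (f := G)
    (by rw [Real.volume_Ioc]; exact ENNReal.ofReal_lt_top)
    (fun x _ => by rw [Real.norm_eq_abs]; exact (crNorm1_pointwise hG hGp).1 x)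
  simpa [Real.volume_real_Ioc] using this

def GoodPt {Ω : Type*} (σ σinv : Ω → Ω) (L : Ω → (ℝ → ℝ) →ₗ[ℝ] (ℝ → ℝ)) (h : Ω → ℝ → ℝ)
    (β : ℝ) (C1 E Q1 : Ω → ℝ) (ω : Ω) : Prop :=
  (∀ j : ℕ, 1 ≤ j → ∀ g : ℝ → ℝ, ContDiff ℝ 1 g → Periodic g 1 →
      crNorm 0 (fun x =>
          iterLin σ L j ω g x - (∫ t in Set.Ioc (0 : ℝ) 1, g t) * h (σ^[j] ω) x) ≤
        C1 ω * (j : ℝ) ^ (-β) * crNorm 1 g) ∧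
  (crNorm 0 (L ω (fun _ => 1)) ≤ E ω) ∧
  (∀ j : ℕ, 1 ≤ j → ∀ g : ℝ → ℝ, ContDiff ℝ 1 g → Periodic g 1 →
      (⨆ x : ℝ, |deriv (iterLin σ L j (σinv^[j] ω) g) x|) ≤
        crNorm 0 (iterLin σ L j (σinv^[j] ω) (fun _ => 1)) * Q1 ω * crNorm 1 g)

lemma key_bound {Ω : Type*} (σ σinv : Ω → Ω) (L : Ω → (ℝ → ℝ) →ₗ[ℝ] (ℝ → ℝ))
    (hLpres0 : ∀ ω : Ω, ∀ g : ℝ → ℝ, Continuous g → Periodic g 1 →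
      Continuous (L ω g) ∧ Periodic (L ω g) 1)
    (hLpres1 : ∀ ω : Ω, ∀ g : ℝ → ℝ, ContDiff ℝ 1 g → Periodic g 1 →
      ContDiff ℝ 1 (L ω g) ∧ Periodic (L ω g) 1)
    (h : Ω → ℝ → ℝ) (hhC0 : ∀ ω : Ω, Continuous (h ω) ∧ Periodic (h ω) 1)
    (β : ℝ) (hβ : 1 < β) (C1 E Q1 : Ω → ℝ)
    (hC1n : ∀ ω, 0 ≤ C1 ω) (hEn : ∀ ω, 0 ≤ E ω) (hQn : ∀ ω, 0 ≤ Q1 ω)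
    (ω₀ ωj : Ω) (j : ℕ) (hj : 1 ≤ j)
    (G₀ : GoodPt σ σinv L h β C1 E Q1 ω₀)
    (Gj : GoodPt σ σinv L h β C1 E Q1 ωj)
    (Gh : GoodPt σ σinv L h β C1 E Q1 (σinv ωj))
    (h_eq : σinv^[j] ωj = ω₀) (hσj : σ^[j] ω₀ = ωj) (hσ1 : σ (σinv ωj) = ωj)
    (g : ℝ → ℝ) (hg : ContDiff ℝ 1 g) (hgp : Periodic g 1) :
    crNorm 1 (iterLin σ L j ω₀ g) ≤
      (1 + C1 ω₀) * ((1 + (C1 (σinv ωj) + E (σinv ωj))) * (1 + Q1 ωj)) * crNorm 1 g := by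
  have presIter := iterLin_pres σ L hLpres1
  have hone : ContDiff ℝ 1 (fun _ : ℝ => (1:ℝ)) := contDiff_const
  have honep : Periodic (fun _ : ℝ => (1:ℝ)) 1 := fun _ => rfl
  have ha := hC1n ω₀
  have hb := hC1n (σinv ωj)
  have hc := hEn (σinv ωj)
  have hd := hQn ωj
  have hN := crNorm_nonneg 1 g
  have hσ1' : σ^[1] (σinv ωj) = ωj := by rw [Function.iterate_one]; exact hσ1
  have hL1e : iterLin σ L 1 (σinv ωj) = L (σinv ωj) := rfl
  have hL1 := hLpres0 (σinv ωj) (fun _ => (1:ℝ)) continuous_const honep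
  have hhj := hhC0 ωj
  have hint1 : (∫ t in Set.Ioc (0:ℝ) 1, (1:ℝ)) = 1 := by simp
  -- bound on ‖h ωj‖∞
  have hhb : ∀ x, |h ωj x| ≤ C1 (σinv ωj) + E (σinv ωj) := by
    have hc0 := Gh.1 1 le_rfl (fun _ => (1:ℝ)) hone honep
    rw [hσ1', hint1, hL1e] at hc0
    simp only [one_mul] at hc0
    have hle : C1 (σinv ωj) * ((1:ℕ) : ℝ) ^ (-β) * crNorm 1 (fun _ : ℝ => (1:ℝ)) ≤
        C1 (σinv ωj) := by
      push_cast
      rw [Real.one_rpow]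
      nlinarith [crNorm1_one_le, crNorm_nonneg 1 (fun _ : ℝ => (1:ℝ))]
    intro x
    have hfc : Continuous (fun x => L (σinv ωj) (fun _ => (1:ℝ)) x - h ωj x) :=
      hL1.1.sub hhj.1
    have hfp : Periodic (fun x => L (σinv ωj) (fun _ => (1:ℝ)) x - h ωj x) 1 := by
      intro y
      simp only
      rw [hL1.2 y, hhj.2 y]
    have h1 := (abs_le_crNorm0 hfc hfp x).trans (hc0.trans hle)
    have h2 := (abs_le_crNorm0 hL1.1 hL1.2 x).trans Gh.2.1
    calc |h ωj x| = |(h ωj x - L (σinv ωj) (fun _ => (1:ℝ)) x) +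
          L (σinv ωj) (fun _ => (1:ℝ)) x| := by congr 1; ring
      _ ≤ |h ωj x - L (σinv ωj) (fun _ => (1:ℝ)) x| +
          |L (σinv ωj) (fun _ => (1:ℝ)) x| := abs_add_le _ _
      _ = |L (σinv ωj) (fun _ => (1:ℝ)) x - h ωj x| +
          |L (σinv ωj) (fun _ => (1:ℝ)) x| := by rw [abs_sub_comm]
      _ ≤ C1 (σinv ωj) + E (σinv ωj) := add_le_add h1 h2
  -- sup-norm bound for a general C¹ function
  have hrp : ((j:ℝ)) ^ (-β) ≤ 1 :=
    Real.rpow_le_one_of_one_le_of_nonpos (by exact_mod_cast hj) (by linarith)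
  have hrpn : (0:ℝ) ≤ ((j:ℝ)) ^ (-β) := Real.rpow_nonneg (by positivity) _
  have hsup : ∀ G : ℝ → ℝ, ContDiff ℝ 1 G → Periodic G 1 → ∀ x,
      |iterLin σ L j ω₀ G x| ≤
        (C1 ω₀ + (C1 (σinv ωj) + E (σinv ωj))) * crNorm 1 G := by
    intro G hG hGp x
    have hiter := presIter j ω₀ G hG hGp
    have h1 := G₀.1 j hj G hG hGp
    rw [hσj] at h1
    have hfc : Continuous (fun x => iterLin σ L j ω₀ G x -
        (∫ t in Set.Ioc (0:ℝ) 1, G t) * h ωj x) :=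
      hiter.1.continuous.sub (continuous_const.mul hhj.1)
    have hfp : Periodic (fun x => iterLin σ L j ω₀ G x -
        (∫ t in Set.Ioc (0:ℝ) 1, G t) * h ωj x) 1 := by
      intro y
      simp only
      rw [hiter.2 y, hhj.2 y]
    have hpt := (abs_le_crNorm0 hfc hfp x).trans h1
    have hintG := int_abs_le_crNorm1 hG hGp
    have hNG := crNorm_nonneg 1 G
    calc |iterLin σ L j ω₀ G x|
        = |(iterLin σ L j ω₀ G x - (∫ t in Set.Ioc (0:ℝ) 1, G t) * h ωj x) +
            (∫ t in Set.Ioc (0:ℝ) 1, G t) * h ωj x| := by congr 1; ring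
      _ ≤ |iterLin σ L j ω₀ G x - (∫ t in Set.Ioc (0:ℝ) 1, G t) * h ωj x| +
            |(∫ t in Set.Ioc (0:ℝ) 1, G t) * h ωj x| := abs_add_le _ _
      _ ≤ C1 ω₀ * (j:ℝ) ^ (-β) * crNorm 1 G +
            |∫ t in Set.Ioc (0:ℝ) 1, G t| * |h ωj x| := by
          rw [abs_mul]; exact add_le_add hpt le_rfl
      _ ≤ C1 ω₀ * crNorm 1 G + crNorm 1 G * (C1 (σinv ωj) + E (σinv ωj)) := by
          refine add_le_add ?_ (mul_le_mul hintG (hhb x) (abs_nonneg _) hNG)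
          calc C1 ω₀ * (j:ℝ) ^ (-β) * crNorm 1 G
              ≤ C1 ω₀ * 1 * crNorm 1 G :=
                mul_le_mul_of_nonneg_right (mul_le_mul_of_nonneg_left hrp ha) hNG
            _ = C1 ω₀ * crNorm 1 G := by ring
      _ = (C1 ω₀ + (C1 (σinv ωj) + E (σinv ωj))) * crNorm 1 G := by ring
  -- sup-norm bound for the iterated image of 1
  have hsup1 : crNorm 0 (iterLin σ L j ω₀ (fun _ => (1:ℝ))) ≤
      C1 ω₀ + (C1 (σinv ωj) + E (σinv ωj)) := by
    refine crNorm_le (by linarith) fun i x => ?_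
    have hlt := i.isLt
    have h0 : ((i : ℕ)) = 0 := by omega
    rw [h0, iteratedDeriv_zero]
    have hx := hsup (fun _ => (1:ℝ)) hone honep x
    have hprod := mul_le_mul_of_nonneg_left crNorm1_one_le
      (by linarith : (0:ℝ) ≤ C1 ω₀ + (C1 (σinv ωj) + E (σinv ωj)))
    rw [mul_one] at hprod
    linarith
  -- derivative bound
  have hder := Gj.2.2 j hj g hg hgp
  rw [h_eq] at hder
  have hiterg := presIter j ω₀ g hg hgp
  have hdx : ∀ x, |deriv (iterLin σ L j ω₀ g) x| ≤
      (C1 ω₀ + (C1 (σinv ωj) + E (σinv ωj))) * Q1 ωj * crNorm 1 g := by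
    intro x
    refine ((abs_deriv_le_iSup hiterg.1 hiterg.2 x).trans hder).trans ?_
    have h0 := crNorm_nonneg 0 (iterLin σ L j ω₀ (fun _ => (1:ℝ)))
    nlinarith [mul_le_mul_of_nonneg_right (mul_le_mul_of_nonneg_right hsup1 hd) hN]
  -- combine
  have hscal : (0:ℝ) ≤ (1 + C1 ω₀) * ((1 + (C1 (σinv ωj) + E (σinv ωj))) * (1 + Q1 ωj)) :=
    mul_nonneg (by linarith) (mul_nonneg (by linarith) (by linarith))
  refine crNorm_le (mul_nonneg hscal hN) fun i x => ?_
  have hlt := i.isLt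
  have h0 : ((i : ℕ)) = 0 ∨ ((i : ℕ)) = 1 := by omega
  rcases h0 with h0 | h0 <;> rw [h0]
  · rw [iteratedDeriv_zero]
    have hx := hsup g hg hgp x
    have hsc : C1 ω₀ + (C1 (σinv ωj) + E (σinv ωj)) ≤
        (1 + C1 ω₀) * ((1 + (C1 (σinv ωj) + E (σinv ωj))) * (1 + Q1 ωj)) := by
      nlinarith [mul_nonneg hb hd, mul_nonneg hc hd, mul_nonneg ha hb, mul_nonneg ha hc, mul_nonneg ha hd, mul_nonneg (mul_nonneg ha hb) hd, mul_nonneg (mul_nonneg ha hc) hd]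
    calc |iterLin σ L j ω₀ g x|
        ≤ (C1 ω₀ + (C1 (σinv ωj) + E (σinv ωj))) * crNorm 1 g := hx
      _ ≤ _ := mul_le_mul_of_nonneg_right hsc hN
  · rw [iteratedDeriv_one]
    have hx := hdx x
    have hsc : (C1 ω₀ + (C1 (σinv ωj) + E (σinv ωj))) * Q1 ωj ≤
        (1 + C1 ω₀) * ((1 + (C1 (σinv ωj) + E (σinv ωj))) * (1 + Q1 ωj)) := by
      nlinarith [mul_nonneg hb hd, mul_nonneg hc hd, mul_nonneg ha hb, mul_nonneg ha hc, mul_nonneg ha hd, mul_nonneg (mul_nonneg ha hb) hd, mul_nonneg (mul_nonneg ha hc) hd]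
    calc |deriv (iterLin σ L j ω₀ g) x|
        ≤ (C1 ω₀ + (C1 (σinv ωj) + E (σinv ωj))) * Q1 ωj * crNorm 1 g := hx
      _ ≤ _ := mul_le_mul_of_nonneg_right hsc hN

theorem stmt_17
    {Ω : Type*} [MeasurableSpace Ω] (ℙ : Measure Ω) [IsProbabilityMeasure ℙ]
    (σ σinv : Ω → Ω)
    (hσ : MeasurePreserving σ ℙ ℙ) (hσinv : Measurable σinv)
    (hinv₁ : Function.LeftInverse σinv σ) (hinv₂ : Function.RightInverse σinv σ)
    -- the operators L_ω, bounded (linear) on C⁰(𝕋) and C¹(𝕋)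
    (L : Ω → (ℝ → ℝ) →ₗ[ℝ] (ℝ → ℝ))
    (hLpres0 : ∀ ω : Ω, ∀ g : ℝ → ℝ, Continuous g → Periodic g 1 →
      Continuous (L ω g) ∧ Periodic (L ω g) 1)
    (hLpres1 : ∀ ω : Ω, ∀ g : ℝ → ℝ, ContDiff ℝ 1 g → Periodic g 1 →
      ContDiff ℝ 1 (L ω g) ∧ Periodic (L ω g) 1)
    (hLbdd0 : ∀ ω : Ω, ∃ Kb : ℝ, ∀ g : ℝ → ℝ, Continuous g → Periodic g 1 →
      crNorm 0 (L ω g) ≤ Kb * crNorm 0 g)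
    (hLbdd1 : ∀ ω : Ω, ∃ Kb : ℝ, ∀ g : ℝ → ℝ, ContDiff ℝ 1 g → Periodic g 1 →
      crNorm 1 (L ω g) ≤ Kb * crNorm 1 g)
    -- the family (h_ω) ⊆ C⁰(𝕋)
    (h : Ω → ℝ → ℝ)
    (hhC0 : ∀ ω : Ω, Continuous (h ω) ∧ Periodic (h ω) 1)
    -- (i)
    (β p₁ : ℝ) (hβ : 1 < β) (hp₁ : 0 < p₁)
    (C1 : Ω → ℝ) (hC1 : MemLpRV ℙ p₁ C1)
    (hi : ∀ᵐ ω ∂ℙ, ∀ j : ℕ, 1 ≤ j →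
      ∀ g : ℝ → ℝ, ContDiff ℝ 1 g → Periodic g 1 →
        crNorm 0 (fun x =>
            iterLin σ L j ω g x - (∫ t in Set.Ioc (0 : ℝ) 1, g t) * h (σ^[j] ω) x) ≤
          C1 ω * (j : ℝ) ^ (-β) * crNorm 1 g)
    -- (ii)
    (e₁ : ℝ) (he₁ : 0 < e₁) (E : Ω → ℝ) (hE : MemLpRV ℙ e₁ E)
    (hEbd : ∀ᵐ ω ∂ℙ, crNorm 0 (L ω (fun _ => 1)) ≤ E ω)
    -- (iii)
    (d₁ : ℝ) (hd₁ : 0 < d₁) (Q1 : Ω → ℝ) (hQ1 : MemLpRV ℙ d₁ Q1)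
    (hiii : ∀ᵐ ω ∂ℙ, ∀ j : ℕ, 1 ≤ j →
      ∀ g : ℝ → ℝ, ContDiff ℝ 1 g → Periodic g 1 →
        (⨆ x : ℝ, |deriv (iterLin σ L j (σinv^[j] ω) g) x|) ≤
          crNorm 0 (iterLin σ L j (σinv^[j] ω) (fun _ => 1)) * Q1 ω * crNorm 1 g)
    (q' : ℝ) (hq' : 1 / q' = 1 / d₁ + 1 / min p₁ e₁) :
    (∀ᵐ ω ∂ℙ, ∀ n : ℕ, 1 ≤ n → ∀ j ≤ n,
      ∀ g : ℝ → ℝ, ContDiff ℝ 1 g → Periodic g 1 →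
        crNorm 1 (iterLin σ L j (σinv^[n] ω) g) ≤
          (1 + C1 (σinv^[n] ω)) *
            ((1 + (C1 (σinv (σinv^[n - j] ω)) + E (σinv (σinv^[n - j] ω)))) *
              (1 + Q1 (σinv^[n - j] ω))) * crNorm 1 g) ∧
      MemLpRV ℙ p₁ (fun ω => 1 + C1 ω) ∧
      MemLpRV ℙ q'
        (fun ω => (1 + (C1 (σinv ω) + E (σinv ω))) * (1 + Q1 ω)) := by
  have hC1n := hC1.2.1
  have hEn := hE.2.1
  have hQn := hQ1.2.1
  have mpinv : MeasurePreserving σinv ℙ ℙ := by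
    refine ⟨hσinv, ?_⟩
    calc ℙ.map σinv = (ℙ.map σ).map σinv := by rw [hσ.map_eq]
      _ = ℙ.map (σinv ∘ σ) := Measure.map_map hσinv hσ.measurable
      _ = ℙ.map id := by rw [show σinv ∘ σ = id from funext hinv₁]
      _ = ℙ := Measure.map_id
  refine ⟨?_, ⟨measurable_const.add hC1.1, fun ω => by have := hC1n ω; show (0:ℝ) ≤ 1 + C1 ω; linarith,
    integrable_one_add_rpow hC1.1 hC1n hp₁ le_rfl hC1.2.2⟩, ?_⟩
  · have hPhi : ∀ᵐ ω ∂ℙ, GoodPt σ σinv L h β C1 E Q1 ω := by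
      filter_upwards [hi, hEbd, hiii] with ω h1 h2 h3
      exact ⟨h1, h2, h3⟩
    have hall : ∀ᵐ ω ∂ℙ, ∀ k : ℕ, GoodPt σ σinv L h β C1 E Q1 (σinv^[k] ω) :=
      ae_all_iff.2 fun k => (mpinv.iterate k).quasiMeasurePreserving.ae hPhi
    filter_upwards [hall] with ω hω
    intro n hn j hjn g hg hgp
    rcases Nat.eq_zero_or_pos j with rfl | hj1
    · have hN := crNorm_nonneg 1 g
      have ha := hC1n (σinv^[n] ω)
      have hb := hC1n (σinv (σinv^[n - 0] ω))
      have hc := hEn (σinv (σinv^[n - 0] ω))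
      have hd := hQn (σinv^[n - 0] ω)
      have hscal : (1:ℝ) ≤ (1 + C1 (σinv^[n] ω)) *
          ((1 + (C1 (σinv (σinv^[n - 0] ω)) + E (σinv (σinv^[n - 0] ω)))) *
            (1 + Q1 (σinv^[n - 0] ω))) := by
        nlinarith [mul_nonneg hb hd, mul_nonneg hc hd, mul_nonneg ha hb, mul_nonneg ha hc,
          mul_nonneg ha hd, mul_nonneg (mul_nonneg ha hb) hd, mul_nonneg (mul_nonneg ha hc) hd]
      calc crNorm 1 (iterLin σ L 0 (σinv^[n] ω) g) = crNorm 1 g := rfl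
        _ = 1 * crNorm 1 g := (one_mul _).symm
        _ ≤ _ := mul_le_mul_of_nonneg_right hscal hN
    · have h_eq : σinv^[j] (σinv^[n - j] ω) = σinv^[n] ω := by
        rw [← Function.iterate_add_apply]
        congr 1
        omega
      have hσj : σ^[j] (σinv^[n] ω) = σinv^[n - j] ω := by
        rw [← h_eq]
        exact Function.LeftInverse.iterate hinv₂ j (σinv^[n - j] ω)
      have hσ1 : σ (σinv (σinv^[n - j] ω)) = σinv^[n - j] ω := hinv₂ _
      have Gh : GoodPt σ σinv L h β C1 E Q1 (σinv (σinv^[n - j] ω)) := by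
        have := hω (n - j + 1)
        rwa [Function.iterate_succ_apply' σinv (n - j) ω] at this
      exact key_bound σ σinv L hLpres0 hLpres1 h hhC0 β hβ C1 E Q1 hC1n hEn hQn
        (σinv^[n] ω) (σinv^[n - j] ω) j hj1 (hω n) (hω (n - j)) Gh h_eq hσj hσ1 g hg hgp
  · -- MemLpRV q'
    set m := min p₁ e₁ with hm_def
    have hm : 0 < m := lt_min hp₁ he₁
    have hq'0 : 0 < q' := by
      have h1 : 0 < 1 / q' := by rw [hq']; positivity
      exact one_div_pos.mp h1
    have hq'm : q' < m := by
      have h2 : 1 / m < 1 / q' := by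
        rw [hq']
        have h3 : 0 < 1 / d₁ := by positivity
        linarith
      have e1 : m * (1 / m) = 1 := by field_simp
      have e2 : q' * (1 / q') = 1 := by field_simp
      nlinarith [mul_pos hm hq'0]
    have hVmeas : Measurable fun ω => 1 + (C1 (σinv ω) + E (σinv ω)) :=
      measurable_const.add ((hC1.1.comp hσinv).add (hE.1.comp hσinv))
    have hQmeas : Measurable fun ω => 1 + Q1 ω := measurable_const.add hQ1.1
    have hBmeas : Measurable fun ω => (1 + (C1 (σinv ω) + E (σinv ω))) * (1 + Q1 ω) :=
      hVmeas.mul hQmeas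
    have hBn : ∀ ω, 0 ≤ (1 + (C1 (σinv ω) + E (σinv ω))) * (1 + Q1 ω) := fun ω => by
      nlinarith [hC1n (σinv ω), hEn (σinv ω), hQn ω]
    refine ⟨hBmeas, hBn, ?_⟩
    have hconj : (m / q').HolderConjugate (d₁ / q') := by
      rw [Real.holderConjugate_iff]
      constructor
      · exact (one_lt_div hq'0).mpr hq'm
      · rw [show (m / q')⁻¹ = q' / m by rw [inv_div], show (d₁ / q')⁻¹ = q' / d₁ by rw [inv_div]]
        have h4 : q' / m + q' / d₁ = q' * (1 / d₁ + 1 / m) := by ring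
        rw [h4, ← hq']
        field_simp
    have hqm' : q' * (m / q') = m := by field_simp
    have hqd' : q' * (d₁ / q') = d₁ := by field_simp
    have hVm0 : Integrable (fun ω => (1 + (C1 ω + E ω)) ^ m) ℙ :=
      integrable_one_add_add_rpow hC1.1 hE.1 hC1n hEn hm (min_le_left _ _) (min_le_right _ _)
        hC1.2.2 hE.2.2
    have hVm : Integrable (fun ω => (1 + (C1 (σinv ω) + E (σinv ω))) ^ m) ℙ := by
      have hmeasF : Measurable fun ω => (1 + (C1 ω + E ω)) ^ m :=
        (Real.continuous_rpow_const hm.le).measurable.comp (measurable_const.add (hC1.1.add hE.1))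
      exact (mpinv.integrable_comp hmeasF.aestronglyMeasurable).mpr hVm0
    have hQd : Integrable (fun ω => (1 + Q1 ω) ^ d₁) ℙ :=
      integrable_one_add_rpow hQ1.1 hQn hd₁ le_rfl hQ1.2.2
    have hBq'meas : Measurable fun ω => ((1 + (C1 (σinv ω) + E (σinv ω))) * (1 + Q1 ω)) ^ q' :=
      (Real.continuous_rpow_const hq'0.le).measurable.comp hBmeas
    refine Integrable.mono'
      (g := fun ω =>
        (1 + (C1 (σinv ω) + E (σinv ω))) ^ m / (m / q') + (1 + Q1 ω) ^ d₁ / (d₁ / q'))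
      ((hVm.div_const _).add (hQd.div_const _)) hBq'meas.aestronglyMeasurable ?_
    filter_upwards with ω
    have ha : (0:ℝ) ≤ 1 + (C1 (σinv ω) + E (σinv ω)) := by
      nlinarith [hC1n (σinv ω), hEn (σinv ω)]
    have hb : (0:ℝ) ≤ 1 + Q1 ω := by nlinarith [hQn ω]
    rw [Real.norm_eq_abs, abs_of_nonneg (Real.rpow_nonneg (mul_nonneg ha hb) q'),
      Real.mul_rpow ha hb]
    have hy := Real.young_inequality_of_nonneg (Real.rpow_nonneg ha q')
      (Real.rpow_nonneg hb q') hconj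
    rw [← Real.rpow_mul ha, ← Real.rpow_mul hb, hqm', hqd'] at hy
    exact hy
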